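/- For any two positive numbers r₁ > 0 and r₂ > 0 and any ω > 0, the classes of pseudo S-asymptotically ω-periodic functions of class r₁ and of class r₂ coincide: PSAP_{ω,r₁}(X) = PSAP_{ω,r₂}(X). -/

import Mathlib

open MeasureTheory Filter Set

lemma my_biSup_eq (g : ℝ → ℝ) (hg0 : ∀ τ, 0 ≤ g τ) (S : Set ℝ) (hS : S.Nonempty)
    (hb : BddAbove (g '' S)) : (⨆ τ ∈ S, g τ) = sSup (g '' S) := by
  have hsup0 : 0 ≤ sSup (g '' S) := Real.sSup_nonneg (by rintro x ⟨τ, hτ, rfl⟩; exact hg0 τ)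
  have hle : ∀ τ : ℝ, (⨆ _ : τ ∈ S, g τ) ≤ sSup (g '' S) := by
    intro τ
    by_cases h : τ ∈ S
    · rw [ciSup_pos h]; exact le_csSup hb (mem_image_of_mem _ h)
    · haveI : IsEmpty (τ ∈ S) := ⟨h⟩
      rw [Real.iSup_of_isEmpty]; exact hsup0
  apply le_antisymm
  · exact ciSup_le hle
  · apply csSup_le (hS.image g)
    rintro x ⟨τ, hτ, rfl⟩
    calc g τ = ⨆ _ : τ ∈ S, g τ := (ciSup_pos (f := fun _ => g τ) hτ).symm
      _ ≤ ⨆ τ, ⨆ _ : τ ∈ S, g τ := le_ciSup ⟨sSup (g '' S), by rintro x ⟨τ', rfl⟩; exact hle τ'⟩ τ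

lemma my_clamp (r s s' τ : ℝ) (hr : 0 ≤ r) (hτ : τ ∈ Icc (s - r) s) :
    ∃ τ' ∈ Icc (s' - r) s', |τ - τ'| ≤ |s - s'| := by
  refine ⟨max (s' - r) (min τ s'), ⟨le_max_left _ _, max_le (by linarith) (min_le_right _ _)⟩, ?_⟩
  obtain ⟨h1, h2⟩ := hτ
  rcases le_total (s' - r) (min τ s') with h | h
  · rw [max_eq_right h]
    rcases le_total τ s' with h' | h'
    · rw [min_eq_left h']; simp
    · rw [min_eq_right h']
      rw [abs_of_nonneg (by linarith)]
      calc τ - s' ≤ s - s' := by linarith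
        _ ≤ |s - s'| := le_abs_self _
  · rw [max_eq_left h]
    rcases min_cases τ s' with ⟨he, h'⟩ | ⟨he, h'⟩ <;> rw [he] at h
    · rw [abs_of_nonpos (by linarith)]
      have : s' - s ≤ |s - s'| := by rw [abs_sub_comm]; exact le_abs_self _
      linarith
    · have hr0 : r = 0 := le_antisymm (by linarith) hr
      have : τ = s := le_antisymm h2 (by linarith)
      subst this; rw [hr0]; simp [abs_sub_comm]

lemma my_F_cont (g : ℝ → ℝ) (hg : ContinuousOn g (Ici 0)) (r : ℝ) (hr : 0 < r) :
    ContinuousOn (fun s => sSup (g '' Icc (s - r) s)) (Ici r) := by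
  intro s₀ hs₀
  rw [Metric.continuousWithinAt_iff]
  intro ε hε
  set K : Set ℝ := Icc 0 (s₀ + 1) with hK
  have hKc : IsCompact K := isCompact_Icc
  have hgK : ContinuousOn g K := hg.mono (fun x hx => hx.1)
  have hbK : BddAbove (g '' K) := (hKc.image_of_continuousOn hgK).bddAbove
  have hu := hKc.uniformContinuousOn_of_continuous hgK
  rw [Metric.uniformContinuousOn_iff] at hu
  obtain ⟨δ₀, hδ₀, hu⟩ := hu (ε / 2) (by linarith)
  have hsubK : ∀ s ∈ Icc r (s₀ + 1), Icc (s - r) s ⊆ K := by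
    intro s hs x hx
    exact ⟨by linarith [hx.1, hs.1], by linarith [hx.2, hs.2]⟩
  have key : ∀ s ∈ Icc r (s₀ + 1), ∀ s' ∈ Icc r (s₀ + 1), dist s s' < δ₀ →
      sSup (g '' Icc (s - r) s) ≤ sSup (g '' Icc (s' - r) s') + ε / 2 := by
    intro s hs s' hs' hd
    apply csSup_le (((nonempty_Icc).2 (by linarith [hs.1])).image g)
    rintro x ⟨τ, hτ, rfl⟩
    obtain ⟨τ', hτ', hclose⟩ := my_clamp r s s' τ hr.le hτ
    have hdist : dist (g τ) (g τ') < ε / 2 := by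
      apply hu τ (hsubK s hs hτ) τ' (hsubK s' hs' hτ')
      calc dist τ τ' = |τ - τ'| := Real.dist_eq _ _
        _ ≤ |s - s'| := hclose
        _ = dist s s' := (Real.dist_eq _ _).symm
        _ < δ₀ := hd
    have h1 : g τ ≤ g τ' + ε / 2 := by
      have := le_of_lt (lt_of_abs_lt (by rw [← Real.dist_eq]; exact hdist))
      linarith
    have h2 : g τ' ≤ sSup (g '' Icc (s' - r) s') :=
      le_csSup (hbK.mono (Set.image_mono (f := g) (hsubK s' hs' ))) (mem_image_of_mem _ hτ')
    linarith
  refine ⟨min δ₀ 1, by positivity, fun {x} hx hdx => ?_⟩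
  have hx1 : x ∈ Icc r (s₀ + 1) := by
    constructor
    · exact hx
    · have := abs_lt.1 (by rw [← Real.dist_eq]; exact lt_of_lt_of_le hdx (min_le_right _ _))
      linarith [this.1, this.2]
  have hs₀1 : s₀ ∈ Icc r (s₀ + 1) := ⟨hs₀, by linarith⟩
  have hdd : dist x s₀ < δ₀ := lt_of_lt_of_le hdx (min_le_left _ _)
  have k1 := key x hx1 s₀ hs₀1 hdd
  have k2 := key s₀ hs₀1 x hx1 (by rwa [dist_comm])
  rw [Real.dist_eq, abs_lt]
  constructor <;> linarith

lemma my_covering (g : ℝ → ℝ) (hg0 : ∀ τ, 0 ≤ g τ) (M : ℝ) (hgM : ∀ τ ≥ (0:ℝ), g τ ≤ M)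
    (r₁ r₂ : ℝ) (hr₁ : 0 < r₁) (hr₂ : 0 < r₂) (s : ℝ) (hs : r₂ + r₁ ≤ s) :
    sSup (g '' Icc (s - r₂) s) ≤
      ∑ k ∈ Finset.range ⌈r₂ / r₁⌉₊, sSup (g '' Icc (s - k * r₁ - r₁) (s - k * r₁)) := by
  set n := ⌈r₂ / r₁⌉₊ with hn
  have hn1 : 1 ≤ n := Nat.one_le_ceil_iff.2 (by positivity)
  have hnr : r₂ ≤ n * r₁ := by
    rw [← div_le_iff₀ hr₁] at *; exact Nat.le_ceil _
  have hterm_nonneg : ∀ k : ℕ, 0 ≤ sSup (g '' Icc (s - k * r₁ - r₁) (s - k * r₁)) := by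
    intro k; exact Real.sSup_nonneg (by rintro x ⟨τ, _, rfl⟩; exact hg0 τ)
  apply csSup_le ((nonempty_Icc.2 (by linarith)).image g)
  rintro x ⟨τ, ⟨hτ1, hτ2⟩, rfl⟩
  set k : ℕ := min ⌊(s - τ) / r₁⌋₊ (n - 1) with hk
  have hkn : k < n := lt_of_le_of_lt (min_le_right _ _) (by omega)
  have hkfloor : (k : ℝ) ≤ (s - τ) / r₁ :=
    le_trans (Nat.cast_le.2 (min_le_left _ _)) (Nat.floor_le (div_nonneg (by linarith) hr₁.le))
  have hup : τ ≤ s - k * r₁ := by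
    rw [le_div_iff₀ hr₁] at hkfloor
    linarith
  have hlow : s - k * r₁ - r₁ ≤ τ := by
    rcases min_cases ⌊(s - τ) / r₁⌋₊ (n - 1) with ⟨he, _⟩ | ⟨he, hlt⟩
    · rw [← hk] at he
      have hc : (k : ℝ) = (⌊(s - τ) / r₁⌋₊ : ℝ) := by exact_mod_cast congrArg Nat.cast he
      have h2 : (s - τ) / r₁ < (k : ℝ) + 1 := by rw [hc]; exact Nat.lt_floor_add_one _
      rw [div_lt_iff₀ hr₁] at h2
      nlinarith [h2]
    · rw [← hk] at he
      have hc : (k : ℝ) = (n : ℝ) - 1 := by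
        rw [he, Nat.cast_sub hn1]; norm_num
      rw [hc]
      nlinarith [hnr]
  have hτk : τ ∈ Icc (s - k * r₁ - r₁) (s - k * r₁) := ⟨hlow, hup⟩
  have hwin : Icc (s - k * r₁ - r₁) (s - k * r₁) ⊆ Ici 0 := by
    intro x hx
    have hkr : (k : ℝ) * r₁ + r₁ ≤ n * r₁ := by
      have : (k : ℝ) + 1 ≤ n := by exact_mod_cast hkn
      nlinarith
    have := hx.1
    simp only [mem_Ici]
    nlinarith [hnr]
  have hbdd : BddAbove (g '' Icc (s - k * r₁ - r₁) (s - k * r₁)) :=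
    ⟨M, by rintro x ⟨τ', hτ', rfl⟩; exact hgM τ' (hwin hτ')⟩
  calc g τ ≤ sSup (g '' Icc (s - k * r₁ - r₁) (s - k * r₁)) :=
        le_csSup hbdd (mem_image_of_mem _ hτk)
    _ ≤ ∑ j ∈ Finset.range n, sSup (g '' Icc (s - j * r₁ - r₁) (s - j * r₁)) :=
        Finset.single_le_sum (fun j _ => hterm_nonneg j) (Finset.mem_range.2 hkn)

lemma my_main (g : ℝ → ℝ) (hg0 : ∀ τ, 0 ≤ g τ) (hg : ContinuousOn g (Ici 0))
    (M : ℝ) (hM0 : 0 ≤ M) (hgM : ∀ τ ≥ (0:ℝ), g τ ≤ M)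
    (r₁ r₂ : ℝ) (hr₁ : 0 < r₁) (hr₂ : 0 < r₂)
    (h1 : Tendsto (fun T : ℝ => (1 / T) * ∫ s in r₁..T, sSup (g '' Icc (s - r₁) s))
      atTop (nhds 0)) :
    Tendsto (fun T : ℝ => (1 / T) * ∫ s in r₂..T, sSup (g '' Icc (s - r₂) s))
      atTop (nhds 0) := by
  set F : ℝ → ℝ → ℝ := fun r s => sSup (g '' Icc (s - r) s) with hF
  have Fnn : ∀ r s, 0 ≤ F r s := fun r s =>
    Real.sSup_nonneg (by rintro x ⟨τ, _, rfl⟩; exact hg0 τ)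
  have FleM : ∀ r s, 0 < r → r ≤ s → F r s ≤ M := by
    intro r s hr hs
    apply Real.sSup_le _ hM0
    rintro x ⟨τ, hτ, rfl⟩
    exact hgM τ (by linarith [hτ.1])
  have Fint : ∀ r, 0 < r → ∀ a b : ℝ, r ≤ a → a ≤ b → IntervalIntegrable (F r) volume a b := by
    intro r hr a b hra hab
    apply ContinuousOn.intervalIntegrable
    rw [uIcc_of_le hab]
    exact (my_F_cont g hg r hr).mono (fun x hx => le_trans hra hx.1)
  set n : ℕ := ⌈r₂ / r₁⌉₊ with hn
  have hn1 : 1 ≤ n := Nat.one_le_ceil_iff.2 (by positivity)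
  have hnr' : ((n : ℝ) - 1) * r₁ < r₂ := by
    have : (n : ℝ) - 1 < r₂ / r₁ := by
      have := Nat.ceil_lt_add_one (R := ℝ) (le_of_lt (by positivity : (0:ℝ) < r₂ / r₁))
      rw [← hn] at this
      linarith
    rwa [← lt_div_iff₀ hr₁]
  set a : ℝ := r₂ + r₁ with ha
  have hshiftlb : ∀ k : ℕ, k < n → r₁ ≤ a - k * r₁ := by
    intro k hk
    have : (k : ℝ) ≤ (n : ℝ) - 1 := by
      have : (k : ℝ) + 1 ≤ n := by exact_mod_cast hk
      linarith
    nlinarith [hnr', hr₁]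
  have extend : ∀ T c d : ℝ, r₁ ≤ c → c ≤ d → d ≤ T →
      (∫ s in c..d, F r₁ s) ≤ ∫ s in r₁..T, F r₁ s := by
    intro T c d h1 h2 h3
    have e1 := intervalIntegral.integral_add_adjacent_intervals
      (Fint r₁ hr₁ r₁ c le_rfl h1) (Fint r₁ hr₁ c T h1 (by linarith))
    have e2 := intervalIntegral.integral_add_adjacent_intervals
      (Fint r₁ hr₁ c d h1 h2) (Fint r₁ hr₁ d T (by linarith) h3)
    have n1 : 0 ≤ ∫ s in r₁..c, F r₁ s :=
      intervalIntegral.integral_nonneg h1 (fun x _ => Fnn r₁ x)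
    have n2 : 0 ≤ ∫ s in d..T, F r₁ s :=
      intervalIntegral.integral_nonneg h3 (fun x _ => Fnn r₁ x)
    linarith
  have KEY : ∀ T : ℝ, a ≤ T →
      (∫ s in r₂..T, F r₂ s) ≤ M * r₁ + n * ∫ s in r₁..T, F r₁ s := by
    intro T hT
    have hr₂a : r₂ ≤ a := by linarith
    have haT : a ≤ T := hT
    have I1 := Fint r₂ hr₂ r₂ a le_rfl hr₂a
    have I2 := Fint r₂ hr₂ a T (by linarith) haT
    have split : (∫ s in r₂..T, F r₂ s) = (∫ s in r₂..a, F r₂ s) + ∫ s in a..T, F r₂ s :=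
      (intervalIntegral.integral_add_adjacent_intervals I1 I2).symm
    have b1 : (∫ s in r₂..a, F r₂ s) ≤ M * r₁ := by
      calc (∫ s in r₂..a, F r₂ s) ≤ ∫ _ in r₂..a, M :=
            intervalIntegral.integral_mono_on hr₂a I1 intervalIntegrable_const
              (fun x hx => FleM r₂ x hr₂ hx.1)
        _ = (a - r₂) • M := intervalIntegral.integral_const M
        _ = M * r₁ := by rw [smul_eq_mul, ha]; ring_nf
    have shiftcont : ∀ k : ℕ, k < n → ContinuousOn (fun s => F r₁ (s - k * r₁)) (Icc a T) := by
      intro k hk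
      apply (my_F_cont g hg r₁ hr₁).comp
        (Continuous.continuousOn (by continuity))
      intro x hx
      have := hshiftlb k hk
      simp only [mem_Ici]
      linarith [hx.1]
    have shiftint : ∀ k : ℕ, k < n →
        IntervalIntegrable (fun s => F r₁ (s - k * r₁)) volume a T := by
      intro k hk
      apply ContinuousOn.intervalIntegrable
      rw [uIcc_of_le haT]
      exact shiftcont k hk
    have b2 : (∫ s in a..T, F r₂ s) ≤
        ∫ s in a..T, ∑ k ∈ Finset.range n, F r₁ (s - k * r₁) := by
      apply intervalIntegral.integral_mono_on haT I2
      · apply ContinuousOn.intervalIntegrable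
        rw [uIcc_of_le haT]
        exact continuousOn_finset_sum _ (fun k hk => shiftcont k (Finset.mem_range.1 hk))
      · intro x hx
        have hxa : r₂ + r₁ ≤ x := hx.1
        have := my_covering g hg0 M hgM r₁ r₂ hr₁ hr₂ x hxa
        simpa [hF] using this
    have b3 : (∫ s in a..T, ∑ k ∈ Finset.range n, F r₁ (s - k * r₁)) =
        ∑ k ∈ Finset.range n, ∫ s in a..T, F r₁ (s - k * r₁) :=
      intervalIntegral.integral_finset_sum (fun k hk => shiftint k (Finset.mem_range.1 hk))
    have b4 : ∀ k ∈ Finset.range n,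
        (∫ s in a..T, F r₁ (s - k * r₁)) ≤ ∫ s in r₁..T, F r₁ s := by
      intro k hk
      rw [intervalIntegral.integral_comp_sub_right (F r₁) ((k : ℝ) * r₁)]
      apply extend T (a - k * r₁) (T - k * r₁) (hshiftlb k (Finset.mem_range.1 hk)) (by linarith)
        (by nlinarith [Nat.cast_nonneg (α := ℝ) k, hr₁.le])
    have b5 : (∑ k ∈ Finset.range n, ∫ s in a..T, F r₁ (s - k * r₁)) ≤
        (n : ℝ) * ∫ s in r₁..T, F r₁ s := by
      calc (∑ k ∈ Finset.range n, ∫ s in a..T, F r₁ (s - k * r₁)) ≤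
          ∑ _k ∈ Finset.range n, ∫ s in r₁..T, F r₁ s := Finset.sum_le_sum b4
        _ = (n : ℝ) * ∫ s in r₁..T, F r₁ s := by
          rw [Finset.sum_const, Finset.card_range, nsmul_eq_mul]
    linarith [b2, b3 ▸ b2]
  have hgtend : Tendsto (fun T : ℝ => (1 / T) * (M * r₁) +
      (n : ℝ) * ((1 / T) * ∫ s in r₁..T, F r₁ s)) atTop (nhds 0) := by
    have t1 : Tendsto (fun T : ℝ => (1 / T) * (M * r₁)) atTop (nhds 0) := by
      simpa using (tendsto_inv_atTop_zero (𝕜 := ℝ)).mul_const (M * r₁)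
    have t2 : Tendsto (fun T : ℝ => (n : ℝ) * ((1 / T) * ∫ s in r₁..T, F r₁ s))
        atTop (nhds 0) := by
      simpa using h1.const_mul (n : ℝ)
    simpa using t1.add t2
  apply squeeze_zero' (t₀ := atTop)
  · filter_upwards [eventually_ge_atTop (max r₂ 1)] with T hT
    have hT1 : (1:ℝ) ≤ T := le_trans (le_max_right _ _) hT
    exact mul_nonneg (by positivity)
      (intervalIntegral.integral_nonneg (le_trans (le_max_left _ _) hT) (fun x _ => Fnn r₂ x))
  · filter_upwards [eventually_ge_atTop (max a 1)] with T hT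
    have hTa : a ≤ T := le_trans (le_max_left _ _) hT
    have hT1 : (1:ℝ) ≤ T := le_trans (le_max_right _ _) hT
    have hinv : 0 ≤ 1 / T := by positivity
    calc (1 / T) * ∫ s in r₂..T, F r₂ s ≤
        (1 / T) * (M * r₁ + n * ∫ s in r₁..T, F r₁ s) :=
          mul_le_mul_of_nonneg_left (KEY T hTa) hinv
      _ = (1 / T) * (M * r₁) + (n : ℝ) * ((1 / T) * ∫ s in r₁..T, F r₁ s) := by ring
  · exact hgtend

/-- `u ∈ PSAP_{ω,r}(X)`: pseudo S-asymptotically ω-periodic of class r. -/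
def PSAPclass {X : Type*} [NormedAddCommGroup X] (ω r : ℝ) (u : ℝ → X) : Prop :=
  Tendsto (fun T : ℝ => (1 / T) * ∫ s in r..T, ⨆ τ ∈ Set.Icc (s - r) s, ‖u (τ + ω) - u τ‖)
    atTop (nhds 0)

lemma my_psap_iff {X : Type*} [NormedAddCommGroup X] (ω r : ℝ) (hr : 0 < r) (u : ℝ → X)
    (M : ℝ) (hgM : ∀ τ ≥ (0:ℝ), ‖u (τ + ω) - u τ‖ ≤ M) :
    PSAPclass ω r u ↔ Tendsto (fun T : ℝ =>
      (1 / T) * ∫ s in r..T, sSup ((fun τ => ‖u (τ + ω) - u τ‖) '' Icc (s - r) s))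
      atTop (nhds 0) := by
  apply tendsto_congr'
  filter_upwards [eventually_ge_atTop r] with T hT
  congr 1
  apply intervalIntegral.integral_congr
  rw [uIcc_of_le hT]
  intro s hs
  apply my_biSup_eq _ (fun τ => norm_nonneg _) _ (nonempty_Icc.2 (by linarith))
  refine ⟨M, ?_⟩
  rintro x ⟨τ, hτ, rfl⟩
  exact hgM τ (by linarith [hτ.1, hs.1])

/-- for r₁, r₂ > 0 the classes coincide: `PSAP_{ω,r₁}(X) = PSAP_{ω,r₂}(X)`. -/
theorem psapClass_indep_of_r {X : Type*} [NormedAddCommGroup X]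
    (r₁ r₂ ω : ℝ) (hr₁ : 0 < r₁) (hr₂ : 0 < r₂) (hω : 0 < ω)
    (u : ℝ → X)
    (hcont : ContinuousOn u (Set.Ici 0)) (hbdd : ∃ B, ∀ t ≥ (0:ℝ), ‖u t‖ ≤ B) :
    PSAPclass ω r₁ u ↔ PSAPclass ω r₂ u := by
  obtain ⟨B, hB⟩ := hbdd
  set g : ℝ → ℝ := fun τ => ‖u (τ + ω) - u τ‖ with hgdef
  have hg0 : ∀ τ, 0 ≤ g τ := fun τ => norm_nonneg _
  have hgM : ∀ τ ≥ (0:ℝ), g τ ≤ B + B := by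
    intro τ hτ
    calc g τ ≤ ‖u (τ + ω)‖ + ‖u τ‖ := norm_sub_le _ _
      _ ≤ B + B := add_le_add (hB _ (by linarith)) (hB _ hτ)
  have hB0 : (0:ℝ) ≤ B := le_trans (norm_nonneg (u 0)) (hB 0 le_rfl)
  have hM0 : (0:ℝ) ≤ B + B := by linarith
  have hg : ContinuousOn g (Ici 0) := by
    have h1 : ContinuousOn (fun τ => u (τ + ω)) (Ici 0) :=
      hcont.comp (Continuous.continuousOn (by continuity))
        (fun τ hτ => by simp only [mem_Ici] at *; linarith)
    exact (h1.sub hcont).norm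
  rw [my_psap_iff ω r₁ hr₁ u (B + B) hgM, my_psap_iff ω r₂ hr₂ u (B + B) hgM]
  constructor
  · exact my_main g hg0 hg (B + B) hM0 hgM r₁ r₂ hr₁ hr₂
  · exact my_main g hg0 hg (B + B) hM0 hgM r₂ r₁ hr₂ hr₁
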